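/- arXiv:2111.02480 — 3 statements merged into one kernel-verified Lean document; each statement's English description precedes it below -/
import Mathlib

section
/- The quotient A/≡ of a Wheeler DFA by the equivalence ≡ (maximal runs of Wheeler-consecutive states with equal incoming labels and Myhill-Nerode equivalent) is itself a Wheeler DFA: the order induced on ≡-classes by the Wheeler order of A (classes being intervals) satisfies the three Wheeler axioms. -/
/-- A Wheeler DFA over a linearly ordered state set `Q` (the Wheeler order)
and a linearly ordered alphabet `A`.  The transition function is partial
(`Option`-valued).  The three Wheeler axioms are part of the structure. -/
structure WDFA (Q A : Type) [LinearOrder Q] [LinearOrder A] where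
  delta : Q → A → Option Q
  start : Q
  F : Set Q
  /-- Wheeler axiom (i): the initial state is minimum. -/
  start_le : ∀ u, start ≤ u
  /-- Wheeler axiom (ii). -/
  w2 : ∀ {u v : Q} {a b : A} {u' v' : Q},
      delta u a = some u' → delta v b = some v' → a < b → u' < v'
  /-- Wheeler axiom (iii). -/
  w3 : ∀ {u v : Q} {a : A} {u' v' : Q},
      delta u a = some u' → delta v a = some v' → u < v → u' ≤ v'

namespace WDFA

variable {Q A : Type} [LinearOrder Q] [LinearOrder A]

/-- Extension of the (partial) transition function to strings. -/
def dhat (M : WDFA Q A) : Q → List A → Option Q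
  | q, [] => some q
  | q, a :: w => (M.delta q a).bind (fun p => M.dhat p w)

/-- `q` accepts the string `w`. -/
def Acc (M : WDFA Q A) (q : Q) (w : List A) : Prop :=
  ∃ p, M.dhat q w = some p ∧ p ∈ M.F

/-- Set of labels of outgoing edges of `q`. -/
def out (M : WDFA Q A) (q : Q) : Set A := {a | (M.delta q a).isSome}

/-- Myhill–Nerode state equivalence (with equal domains of definition). -/
def MN (M : WDFA Q A) (u v : Q) : Prop :=
  ∀ w : List A, (M.dhat u w).isSome = (M.dhat v w).isSome ∧ (M.Acc u w ↔ M.Acc v w)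

/-- Myhill–Nerode state equivalence, acceptance-only version
(undefined counts as rejecting). -/
def MNacc (M : WDFA Q A) (u v : Q) : Prop :=
  ∀ w : List A, M.Acc u w ↔ M.Acc v w

/-- `u` and `v` are adjacent in the Wheeler order. -/
def Adj (M : WDFA Q A) (u v : Q) : Prop :=
  u < v ∧ ∀ w : Q, ¬ (u < w ∧ w < v)

/-- `lam` is the incoming-label map: `lam start = ⊥` (the special symbol `#`)
and every transition entering `v` is labelled `lam v`. -/
def HasLam (M : WDFA Q A) (lam : Q → WithBot A) : Prop :=
  lam M.start = ⊥ ∧ ∀ u a v, M.delta u a = some v → lam v = (a : WithBot A)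

/-- Every non-initial state has an incoming transition (reachability). -/
def Reach1 (M : WDFA Q A) : Prop :=
  ∀ u, u ≠ M.start → ∃ p a, M.delta p a = some u

/-- Every state accepts some string (is final or reaches a final state). -/
def Coacc (M : WDFA Q A) : Prop := ∀ u, ∃ w, M.Acc u w

/-- The minimum-WDFA equivalence `≡`: `u` and `v` have the same incoming
label, are Myhill–Nerode equivalent, and so is every state between them in
the Wheeler order. -/
def Equ (M : WDFA Q A) (lam : Q → WithBot A) (u v : Q) : Prop :=
  lam u = lam v ∧ M.MN u v ∧
    ∀ w, min u v ≤ w → w ≤ max u v → lam w = lam u ∧ M.MN w u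

/-- `(u,v)` is a node of the border graph: adjacent states with equal
incoming labels. -/
def IsBorder (M : WDFA Q A) (lam : Q → WithBot A) (u v : Q) : Prop :=
  M.Adj u v ∧ lam u = lam v

/-- Edge relation of the border graph `B(A)`: there is an edge from the
border `x` to the border `y` whenever `x.1 = δ(y.1, λ(x.1))` and
`x.2 = δ(y.2, λ(x.1))`. -/
def EdgeZ (M : WDFA Q A) (lam : Q → WithBot A) : Q × Q → Q × Q → Prop :=
  fun x y => M.IsBorder lam x.1 x.2 ∧ M.IsBorder lam y.1 y.2 ∧
    ∃ a : A, lam x.1 = (a : WithBot A) ∧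
      M.delta y.1 a = some x.1 ∧ M.delta y.2 a = some x.2

/-- Transition function of the quotient automaton `A/st`
(`δ([u],a) = [δ(u,a)]`, implemented via representatives). -/
noncomputable def qdelta (M : WDFA Q A) (st : Setoid Q) (c : Quotient st) (a : A) :
    Option (Quotient st) :=
  (M.delta (Quotient.out c) a).map (Quotient.mk st)

/-- String extension of the quotient transition function. -/
noncomputable def qdhat (M : WDFA Q A) (st : Setoid Q) : Quotient st → List A → Option (Quotient st)
  | c, [] => some c
  | c, a :: w => (M.qdelta st c a).bind (fun d => M.qdhat st d w)

/-- The quotient automaton accepts `w`. -/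
def qAcc (M : WDFA Q A) (st : Setoid Q) (w : List A) : Prop :=
  ∃ c, M.qdhat st (Quotient.mk st M.start) w = some c ∧
    ∃ u ∈ M.F, Quotient.mk st u = c

/-- Order induced on `≡`-classes by the Wheeler order (classes are
intervals, so comparing arbitrary representatives is well defined). -/
def qle (st : Setoid Q) (c d : Quotient st) : Prop :=
  c = d ∨ ∀ u v : Q, Quotient.mk st u = c → Quotient.mk st v = d → u < v

end WDFA


namespace WDFA

lemma MN_trans' {Q A : Type} [LinearOrder Q] [LinearOrder A] {M : WDFA Q A}
    {x y z : Q} (h1 : M.MN x y) (h2 : M.MN y z) : M.MN x z := by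
  intro w
  exact ⟨(h1 w).1.trans (h2 w).1, (h1 w).2.trans (h2 w).2⟩

lemma MN_symm' {Q A : Type} [LinearOrder Q] [LinearOrder A] {M : WDFA Q A}
    {x y : Q} (h1 : M.MN x y) : M.MN y x := by
  intro w
  exact ⟨(h1 w).1.symm, (h1 w).2.symm⟩

/-- Classes are intervals. -/
lemma interval_lemma {Q A : Type} [LinearOrder Q] [LinearOrder A]
    (M : WDFA Q A) (lam : Q → WithBot A) (st : Setoid Q)
    (hst : ∀ u v : Q, st.r u v ↔ M.Equ lam u v)
    {a b w : Q} (hab : st.r a b) (h1 : a ≤ w) (h2 : w ≤ b) : st.r w a := by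
  obtain ⟨hl, hmn, hint⟩ := (hst a b).1 hab
  have hmin : min a b = a := min_eq_left (h1.trans h2)
  have hmax : max a b = b := max_eq_right (h1.trans h2)
  have hw := hint w (by rw [hmin]; exact h1) (by rw [hmax]; exact h2)
  refine (hst w a).2 ⟨hw.1, hw.2, ?_⟩
  intro x hx1 hx2
  rw [min_comm, min_eq_left h1] at hx1
  rw [max_comm, max_eq_right h1] at hx2
  have hx := hint x (by rw [hmin]; exact hx1) (by rw [hmax]; exact hx2.trans h2)
  exact ⟨hx.1.trans hw.1.symm, MN_trans' hx.2 (MN_symm' hw.2)⟩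

/-- If `u < v` in different classes, then everything in `u`'s class is below
everything in `v`'s class. -/
lemma lt_all {Q A : Type} [LinearOrder Q] [LinearOrder A]
    (M : WDFA Q A) (lam : Q → WithBot A) (st : Setoid Q)
    (hst : ∀ u v : Q, st.r u v ↔ M.Equ lam u v)
    {u v : Q} (huv : u < v) (hne : ¬ st.r u v) :
    ∀ x y : Q, st.r x u → st.r y v → x < y := by
  intro x y hxu hyv
  by_contra h
  push_neg at h
  rcases le_or_gt y u with hyu | huy
  · exact hne (st.iseqv.trans (interval_lemma M lam st hst hyv hyu huv.le) hyv)
  · have : st.r y u :=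
      interval_lemma M lam st hst (st.iseqv.symm hxu) huy.le h
    exact hne (st.iseqv.trans (st.iseqv.symm this) hyv)

end WDFA

/-- the quotient `A/≡` is itself a Wheeler DFA: the order
induced on `≡`-classes by the Wheeler order is a linear order satisfying the
three Wheeler axioms. -/
theorem wdfa_quotient_is_wheeler {Q A : Type} [LinearOrder Q] [LinearOrder A]
    (M : WDFA Q A) (lam : Q → WithBot A) (hlam : M.HasLam lam)
    (hreach : M.Reach1) (st : Setoid Q)
    (hst : ∀ u v : Q, st.r u v ↔ M.Equ lam u v) :
    IsLinearOrder (Quotient st) (WDFA.qle st) ∧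
    (∀ c : Quotient st, WDFA.qle st (Quotient.mk st M.start) c) ∧
    (∀ (c d c' d' : Quotient st) (a b : A),
      M.qdelta st c a = some c' → M.qdelta st d b = some d' → a < b →
        WDFA.qle st c' d' ∧ c' ≠ d') ∧
    (∀ (c d c' d' : Quotient st) (a : A),
      M.qdelta st c a = some c' → M.qdelta st d a = some d' →
        WDFA.qle st c d → c ≠ d → WDFA.qle st c' d') := by
  classical
  -- basic facts
  have strict_lemma : ∀ {u v : Q}, u < v → ¬ st.r u v →
      ∀ x y : Q, st.r x u → st.r y v → x < y :=
    fun {u v} huv hne => WDFA.lt_all M lam st hst huv hne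
  have key : ∀ c d : Quotient st, c ≠ d →
      (∀ u v : Q, Quotient.mk st u = c → Quotient.mk st v = d → u < v) ∨
      (∀ u v : Q, Quotient.mk st u = d → Quotient.mk st v = c → u < v) := by
    intro c d hcd
    obtain ⟨u, rfl⟩ := Quotient.exists_rep c
    obtain ⟨v, rfl⟩ := Quotient.exists_rep d
    have hnr : ¬ st.r u v := fun h => hcd (Quotient.sound h)
    rcases lt_or_gt_of_ne (fun h : u = v => hcd (by rw [h])) with h | h
    · left
      intro x y hx hy
      exact strict_lemma h hnr x y (Quotient.exact hx) (Quotient.exact hy)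
    · right
      intro x y hx hy
      exact strict_lemma h (fun h' => hnr (st.iseqv.symm h')) x y (Quotient.exact hx)
        (Quotient.exact hy)
  have qle_lt : ∀ {u v : Q}, u < v → ¬ st.r u v →
      WDFA.qle st (Quotient.mk st u) (Quotient.mk st v) := by
    intro u v huv hnr
    right
    intro x y hx hy
    exact strict_lemma huv hnr x y (Quotient.exact hx) (Quotient.exact hy)
  refine ⟨?_, ?_, ?_, ?_⟩
  · refine { refl := fun c => Or.inl rfl, trans := ?_, antisymm := ?_, total := ?_ }
    · rintro a b c (rfl | hab) hbc
      · exact hbc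
      · rcases hbc with rfl | hbc
        · exact Or.inr hab
        · right
          intro u v hu hv
          obtain ⟨w, rfl⟩ := Quotient.exists_rep b
          exact (hab u w hu rfl).trans (hbc w v rfl hv)
    · rintro a b (rfl | hab) hba
      · rfl
      · rcases hba with rfl | hba
        · rfl
        · obtain ⟨u, rfl⟩ := Quotient.exists_rep a
          obtain ⟨v, rfl⟩ := Quotient.exists_rep b
          exact absurd (hab u v rfl rfl) (not_lt_of_gt (hba v u rfl rfl))
    · intro a b
      by_cases h : a = b
      · exact Or.inl (Or.inl h)
      · rcases key a b h with h' | h'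
        · exact Or.inl (Or.inr h')
        · exact Or.inr (Or.inr h')
  · intro c
    by_cases h : Quotient.mk st M.start = c
    · exact Or.inl h
    · right
      intro u v hu hv
      have hus : st.r u M.start := Quotient.exact hu
      have hsv : M.start ≤ v := M.start_le v
      have hsu : M.start ≤ u := M.start_le u
      rcases lt_or_ge u v with h1 | h1
      · exact h1
      · exfalso
        have : st.r v M.start :=
          WDFA.interval_lemma M lam st hst (st.iseqv.symm hus) hsv h1
        exact h (hv ▸ (Quotient.sound this).symm)
  · intro c d c' d' a b hc hd hab
    unfold WDFA.qdelta at hc hd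
    rcases h1 : M.delta (Quotient.out c) a with _ | u' <;> rw [h1] at hc
    · simp at hc
    rcases h2 : M.delta (Quotient.out d) b with _ | v' <;> rw [h2] at hd
    · simp at hd
    simp only [Option.map_some] at hc hd
    injection hc with hc
    injection hd with hd
    subst hc; subst hd
    have huv : u' < v' := M.w2 h1 h2 hab
    have hlu : lam u' = (a : WithBot A) := hlam.2 _ _ _ h1
    have hlv : lam v' = (b : WithBot A) := hlam.2 _ _ _ h2
    have hnr : ¬ st.r u' v' := by
      intro h
      have := ((hst u' v').1 h).1
      rw [hlu, hlv] at this
      exact absurd (WithBot.coe_injective this) (ne_of_lt hab)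
    refine ⟨qle_lt huv hnr, ?_⟩
    intro h
    exact hnr (Quotient.exact h)
  · intro c d c' d' a hc hd hcd hne
    unfold WDFA.qdelta at hc hd
    rcases h1 : M.delta (Quotient.out c) a with _ | u' <;> rw [h1] at hc
    · simp at hc
    rcases h2 : M.delta (Quotient.out d) a with _ | v' <;> rw [h2] at hd
    · simp at hd
    simp only [Option.map_some] at hc hd
    injection hc with hc
    injection hd with hd
    subst hc; subst hd
    rcases hcd with rfl | hcd
    · exact absurd rfl hne
    have houtlt : Quotient.out c < Quotient.out d :=
      hcd _ _ (Quotient.out_eq c) (Quotient.out_eq d)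
    have huv : u' ≤ v' := M.w3 h1 h2 houtlt
    by_cases h : (Quotient.mk st u' : Quotient st) = Quotient.mk st v'
    · exact Or.inl h
    · have hne' : u' ≠ v' := fun h' => h (by rw [h'])
      have hnr : ¬ st.r u' v' := fun h' => h (Quotient.sound h')
      exact qle_lt (lt_of_le_of_ne huv hne') hnr
end

section
/- Correctness of border-marking: in a Wheeler DFA A with adjacent states u_i < u_{i+1}, we have u_i ≉ u_{i+1} (not Myhill-Nerode equivalent) if and only if there exists a string α such that v = δ̂(u_i, α) and v' = δ̂(u_{i+1}, α) are both defined, and either out(v) ≠ out(v') or final(v) ≠ final(v'). -/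
namespace WDFA

variable {Q A : Type} [LinearOrder Q] [LinearOrder A]

lemma dhat_append (M : WDFA Q A) (u : Q) (α β : List A) :
    M.dhat u (α ++ β) = (M.dhat u α).bind (fun p => M.dhat p β) := by
  induction α generalizing u with
  | nil => simp [dhat]
  | cons a α ih =>
    simp only [List.cons_append, dhat]
    cases h : M.delta u a with
    | none => simp
    | some p => simp [ih]

lemma acc_nil (M : WDFA Q A) (u : Q) : M.Acc u [] ↔ u ∈ M.F := by
  simp [Acc, dhat]

lemma acc_of_dhat (M : WDFA Q A) {u v : Q} {α : List A} (h : M.dhat u α = some v) :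
    M.Acc u α ↔ v ∈ M.F := by
  constructor
  · rintro ⟨p, hp, hpF⟩
    rw [h] at hp
    exact (Option.some_inj.mp hp) ▸ hpF
  · intro hv
    exact ⟨v, h, hv⟩

lemma distinguish (M : WDFA Q A) :
    ∀ (w : List A) (u u' : Q), M.Acc u w → ¬ M.Acc u' w →
      ∃ (α : List A) (v v' : Q), M.dhat u α = some v ∧ M.dhat u' α = some v' ∧
        (M.out v ≠ M.out v' ∨ ¬ (v ∈ M.F ↔ v' ∈ M.F)) := by
  intro w
  induction w with
  | nil =>
    intro u u' hu hu'
    refine ⟨[], u, u', rfl, rfl, Or.inr ?_⟩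
    rw [acc_nil] at hu hu'
    tauto
  | cons a w ih =>
    intro u u' hu hu'
    obtain ⟨f, hf, hfF⟩ := hu
    simp only [dhat] at hf
    cases hp : M.delta u a with
    | none => rw [hp] at hf; simp at hf
    | some p =>
      rw [hp] at hf
      simp only [Option.bind_some] at hf
      cases hp' : M.delta u' a with
      | none =>
        refine ⟨[], u, u', rfl, rfl, Or.inl ?_⟩
        intro h
        have ha : a ∈ M.out u := by simp [out, hp]
        have : a ∈ M.out u' := h ▸ ha
        simp [out, hp'] at this
      | some p' =>
        have hAp : M.Acc p w := ⟨f, hf, hfF⟩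
        have hAp' : ¬ M.Acc p' w := by
          rintro ⟨g, hg, hgF⟩
          exact hu' ⟨g, by simp [dhat, hp', hg], hgF⟩
        obtain ⟨α, v, v', h1, h2, h3⟩ := ih p p' hAp hAp'
        exact ⟨a :: α, v, v', by simp [dhat, hp, h1], by simp [dhat, hp', h2], h3⟩

end WDFA

/-- correctness of border-marking: adjacent states are
Myhill–Nerode inequivalent iff some string leads both to defined states
differing in outgoing labels or in finality. -/
theorem wdfa_marking_correct {Q A : Type} [LinearOrder Q] [LinearOrder A]
    (M : WDFA Q A) (hco : M.Coacc) (ui ui1 : Q) (hadj : M.Adj ui ui1) :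
    ¬ M.MNacc ui ui1 ↔
      ∃ (α : List A) (v v' : Q), M.dhat ui α = some v ∧ M.dhat ui1 α = some v' ∧
        (M.out v ≠ M.out v' ∨ ¬ (v ∈ M.F ↔ v' ∈ M.F)) := by
  constructor
  · intro hMN
    have : ∃ w, ¬ (M.Acc ui w ↔ M.Acc ui1 w) := by
      by_contra h
      push_neg at h
      exact hMN h
    obtain ⟨w, hw⟩ := this
    by_cases h1 : M.Acc ui w
    · have h2 : ¬ M.Acc ui1 w := by tauto
      exact M.distinguish w ui ui1 h1 h2
    · have h2 : M.Acc ui1 w := by tauto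
      obtain ⟨α, v, v', ha, hb, hc⟩ := M.distinguish w ui1 ui h2 h1
      refine ⟨α, v', v, hb, ha, ?_⟩
      rcases hc with hc | hc
      · exact Or.inl hc.symm
      · exact Or.inr fun h => hc h.symm
  · rintro ⟨α, v, v', h1, h2, hdiff⟩ hMN
    rcases hdiff with hne | hne
    · have : ∃ a, ¬ (a ∈ M.out v ↔ a ∈ M.out v') := by
        by_contra h
        push_neg at h
        exact hne (Set.ext fun a => h a)
      obtain ⟨a, ha⟩ := this
      by_cases hav : a ∈ M.out v
      · have hav' : a ∉ M.out v' := by tauto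
        simp only [WDFA.out, Set.mem_setOf_eq, Option.isSome_iff_exists] at hav hav'
        obtain ⟨p, hp⟩ := hav
        obtain ⟨β, g, hg, hgF⟩ := hco p
        have hAcc : M.Acc ui (α ++ a :: β) :=
          ⟨g, by rw [M.dhat_append, h1]; simp [WDFA.dhat, hp, hg], hgF⟩
        have := (hMN (α ++ a :: β)).mp hAcc
        obtain ⟨g', hg', _⟩ := this
        rw [M.dhat_append, h2] at hg'
        simp only [Option.bind_some, WDFA.dhat] at hg'
        cases hq : M.delta v' a with
        | none => rw [hq] at hg'; simp at hg'
        | some q => exact hav' ⟨q, hq⟩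
      · have hav' : a ∈ M.out v' := by tauto
        simp only [WDFA.out, Set.mem_setOf_eq, Option.isSome_iff_exists] at hav hav'
        obtain ⟨p, hp⟩ := hav'
        obtain ⟨β, g, hg, hgF⟩ := hco p
        have hAcc : M.Acc ui1 (α ++ a :: β) :=
          ⟨g, by rw [M.dhat_append, h2]; simp [WDFA.dhat, hp, hg], hgF⟩
        have := (hMN (α ++ a :: β)).mpr hAcc
        obtain ⟨g', hg', _⟩ := this
        rw [M.dhat_append, h1] at hg'
        simp only [Option.bind_some, WDFA.dhat] at hg'
        cases hq : M.delta v a with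
        | none => rw [hq] at hg'; simp at hg'
        | some q => exact hav ⟨q, hq⟩
    · have := hMN α
      rw [M.acc_of_dhat h1, M.acc_of_dhat h2] at this
      exact hne this
end

section
/- Reachability in the border graph characterizes propagation: for borders (u_i, u_{i+1}) and (u_j, u_{j+1}) of a Wheeler DFA A, the pair (u_i, u_{i+1}) is reachable from (u_j, u_{j+1}) in the border graph B(A) if and only if there exists a string α ∈ Σ* such that δ̂(u_i, α) = u_j, δ̂(u_{i+1}, α) = u_{j+1}, and for every proper prefix β of α, δ̂(u_i, β) and δ̂(u_{i+1}, β) are distinct Wheeler-adjacent states with equal incoming labels. -/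
namespace WDFA

variable {Q A : Type} [LinearOrder Q] [LinearOrder A]

lemma dhat_cons' (M : WDFA Q A) {u v : Q} {a : A} (h : M.delta u a = some v) (w : List A) :
    M.dhat u (a :: w) = M.dhat v w := by simp [dhat, h]

lemma border_forward_aux (M : WDFA Q A) (lam : Q → WithBot A)
    (uj uj1 : Q) (x : Q × Q) (h : Relation.ReflTransGen (M.EdgeZ lam) (uj, uj1) x) :
    M.IsBorder lam x.1 x.2 →
    ∃ α : List A, M.dhat x.1 α = some uj ∧ M.dhat x.2 α = some uj1 ∧
      ∀ β : List A, β <+: α → β ≠ α →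
        ∃ v v' : Q, M.dhat x.1 β = some v ∧ M.dhat x.2 β = some v' ∧
          v ≠ v' ∧ M.Adj v v' ∧ lam v = lam v' := by
  induction h with
  | refl =>
      intro _
      exact ⟨[], rfl, rfl, fun β hβ hne => absurd (List.prefix_nil.mp hβ) hne⟩
  | @tail b c h1 h2 ih =>
      intro _
      obtain ⟨hbc, hbx', a, hla, hd1, hd2⟩ := h2
      obtain ⟨α, hα1, hα2, hpre⟩ := ih hbc
      refine ⟨a :: α, ?_, ?_, ?_⟩
      · rw [M.dhat_cons' hd1]; exact hα1
      · rw [M.dhat_cons' hd2]; exact hα2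
      · intro β hβ hne
        match β with
        | [] =>
            exact ⟨c.1, c.2, rfl, rfl, ne_of_lt hbx'.1.1, hbx'.1, hbx'.2⟩
        | e :: γ =>
            obtain ⟨he, hγ⟩ := List.cons_prefix_cons.mp hβ
            subst he
            have hne' : γ ≠ α := fun h => hne (by rw [h])
            obtain ⟨v, v', hv, hv', hvv⟩ := hpre γ hγ hne'
            exact ⟨v, v', by rw [M.dhat_cons' hd1]; exact hv,
              by rw [M.dhat_cons' hd2]; exact hv', hvv⟩

lemma border_backward_aux (M : WDFA Q A) (lam : Q → WithBot A) (hlam : M.HasLam lam)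
    (uj uj1 : Q) (hbj : M.IsBorder lam uj uj1) :
    ∀ α : List A, ∀ ui ui1 : Q, M.IsBorder lam ui ui1 →
      M.dhat ui α = some uj → M.dhat ui1 α = some uj1 →
      (∀ β : List A, β <+: α → β ≠ α →
        ∃ v v' : Q, M.dhat ui β = some v ∧ M.dhat ui1 β = some v' ∧
          v ≠ v' ∧ M.Adj v v' ∧ lam v = lam v') →
      Relation.ReflTransGen (M.EdgeZ lam) (uj, uj1) (ui, ui1) := by
  intro α
  induction α with
  | nil =>
      intro ui ui1 _ h1 h2 _
      obtain rfl : ui = uj := Option.some.inj h1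
      obtain rfl : ui1 = uj1 := Option.some.inj h2
      exact Relation.ReflTransGen.refl
  | cons a α ih =>
      intro ui ui1 hbi h1 h2 hpre
      obtain ⟨v, hd⟩ : ∃ v, M.delta ui a = some v := by
        cases hd : M.delta ui a with
        | none => simp [dhat, hd] at h1
        | some v => exact ⟨v, rfl⟩
      obtain ⟨v', hd'⟩ : ∃ v', M.delta ui1 a = some v' := by
        cases hd' : M.delta ui1 a with
        | none => simp [dhat, hd'] at h2
        | some v' => exact ⟨v', rfl⟩
      rw [M.dhat_cons' hd] at h1
      rw [M.dhat_cons' hd'] at h2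
      have hbv : M.IsBorder lam v v' := by
        rcases eq_or_ne α [] with rfl | hαne
        · obtain rfl : v = uj := Option.some.inj h1
          obtain rfl : v' = uj1 := Option.some.inj h2
          exact hbj
        · have hpf : [a] <+: a :: α := ⟨α, rfl⟩
          have hne : [a] ≠ a :: α := by
            intro h; exact hαne (by injection h with _ h2; exact h2.symm)
          obtain ⟨w, w', hw, hw', _, hadj, hl⟩ := hpre [a] hpf hne
          rw [M.dhat_cons' hd] at hw
          rw [M.dhat_cons' hd'] at hw'
          obtain rfl : v = w := Option.some.inj hw
          obtain rfl : v' = w' := Option.some.inj hw'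
          exact ⟨hadj, hl⟩
      have hedge : M.EdgeZ lam (v, v') (ui, ui1) :=
        ⟨hbv, hbi, a, hlam.2 ui a v hd, hd, hd'⟩
      have hrtg : Relation.ReflTransGen (M.EdgeZ lam) (uj, uj1) (v, v') := by
        apply ih v v' hbv h1 h2
        intro β hβ hne
        have hpf : a :: β <+: a :: α := List.cons_prefix_cons.mpr ⟨rfl, hβ⟩
        have hne' : a :: β ≠ a :: α := fun h => hne (by injection h)
        obtain ⟨w, w', hw, hw', hvv⟩ := hpre (a :: β) hpf hne'
        rw [M.dhat_cons' hd] at hw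
        rw [M.dhat_cons' hd'] at hw'
        exact ⟨w, w', hw, hw', hvv⟩
      exact hrtg.tail hedge

end WDFA

/-- reachability in the border graph characterizes propagation
via strings whose intermediate images are distinct Wheeler-adjacent states
with equal incoming labels. -/
theorem wdfa_border_reachability {Q A : Type} [LinearOrder Q] [LinearOrder A]
    (M : WDFA Q A) (lam : Q → WithBot A) (hlam : M.HasLam lam)
    (ui ui1 uj uj1 : Q)
    (hbi : M.IsBorder lam ui ui1) (hbj : M.IsBorder lam uj uj1) :
    Relation.ReflTransGen (M.EdgeZ lam) (uj, uj1) (ui, ui1) ↔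
      ∃ α : List A, M.dhat ui α = some uj ∧ M.dhat ui1 α = some uj1 ∧
        ∀ β : List A, β <+: α → β ≠ α →
          ∃ v v' : Q, M.dhat ui β = some v ∧ M.dhat ui1 β = some v' ∧
            v ≠ v' ∧ M.Adj v v' ∧ lam v = lam v' := by
  constructor
  · intro h
    exact M.border_forward_aux lam uj uj1 (ui, ui1) h hbi
  · rintro ⟨α, h1, h2, h3⟩
    exact M.border_backward_aux lam hlam uj uj1 hbj α ui ui1 hbi h1 h2 h3
end
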